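/- The function F(x) = 1 - x⁴ - 4x²·ψ'(1/(1-x)) is strictly decreasing on (0,1). -/

import Mathlib

open Real Filter Asymptotics MeasureTheory Set Topology

noncomputable def trigamma (y : ℝ) : ℝ := ∑' m : ℕ, 1 / (m + y)^2

noncomputable def psi2 (y : ℝ) : ℝ := -2 * ∑' m : ℕ, 1 / (m + y)^3

lemma summable_shift (y : ℝ) (hy : 1 ≤ y) (k : ℕ) (hk : 2 ≤ k) :
    Summable (fun m : ℕ => 1 / ((m : ℝ) + y) ^ k) := by
  have hbase : Summable (fun m : ℕ => 1 / ((m : ℝ) + 1) ^ k) := by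
    have := (summable_nat_add_iff (f := fun n : ℕ => 1 / (n : ℝ) ^ k) 1).2
      (Real.summable_one_div_nat_pow.2 hk)
    simpa [Nat.cast_add] using this
  refine Summable.of_nonneg_of_le (fun m => by positivity) (fun m => ?_) hbase
  have h1 : (0:ℝ) < (m : ℝ) + 1 := by positivity
  gcongr

lemma hasSum_telescope' (g : ℕ → ℝ) (h0 : Tendsto g atTop (nhds 0))
    (hnn : ∀ n, 0 ≤ g n - g (n + 1)) :
    HasSum (fun n => g n - g (n + 1)) (g 0) := by
  rw [hasSum_iff_tendsto_nat_of_nonneg hnn]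
  have : ∀ n, ∑ i ∈ Finset.range n, (g i - g (i + 1)) = g 0 - g n := by
    intro n; exact Finset.sum_range_sub' g n
  simp only [this]
  simpa using tendsto_const_nhds.sub h0

lemma trigamma_ge (y : ℝ) (hy : 1 ≤ y) : 1 / y ≤ trigamma y := by
  have hy0 : (0:ℝ) < y := by linarith
  set g : ℕ → ℝ := fun n => 1 / ((n : ℝ) + y) with hg
  have hpos : ∀ n : ℕ, (0:ℝ) < (n : ℝ) + y := fun n => by positivity
  have h0 : Tendsto g atTop (nhds 0) := by
    have h1 : Tendsto (fun n : ℕ => (n : ℝ) + y) atTop atTop :=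
      tendsto_atTop_add_const_right _ y tendsto_natCast_atTop_atTop
    simpa [hg, one_div, Pi.inv_def] using h1.inv_tendsto_atTop
  have hnn : ∀ n : ℕ, 0 ≤ g n - g (n + 1) := by
    intro n
    have h1 := hpos n
    have h2 := hpos (n + 1)
    have : g (n + 1) ≤ g n := by
      apply one_div_le_one_div_of_le h1
      push_cast; linarith
    linarith
  have hts : HasSum (fun n => g n - g (n + 1)) (1 / y) := by
    have := hasSum_telescope' g h0 hnn
    simpa [hg] using this
  have hle : ∀ n : ℕ, g n - g (n + 1) ≤ 1 / ((n : ℝ) + y) ^ 2 := by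
    intro n
    have h1 := hpos n
    have h2 := hpos (n + 1)
    have heq : g n - g (n + 1) = 1 / (((n : ℝ) + y) * ((n : ℝ) + 1 + y)) := by
      simp only [hg]; push_cast; field_simp; ring
    rw [heq]
    apply one_div_le_one_div_of_le (by positivity)
    push_cast
    nlinarith
  have hsum2 := summable_shift y hy 2 le_rfl
  calc 1 / y = ∑' n, (g n - g (n + 1)) := hts.tsum_eq.symm
    _ ≤ ∑' n : ℕ, 1 / ((n : ℝ) + y) ^ 2 := Summable.tsum_le_tsum hle hts.summable hsum2
    _ = trigamma y := rfl

lemma cube_sum_le (y : ℝ) (hy : 1 ≤ y) :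
    (∑' m : ℕ, 1 / ((m : ℝ) + y) ^ 3) ≤ 1 / (2 * (y - 1/2) ^ 2) := by
  set g : ℕ → ℝ := fun n => 1 / (2 * ((n : ℝ) + y - 1/2) ^ 2) with hg
  have hpos : ∀ n : ℕ, (0:ℝ) < (n : ℝ) + y - 1/2 := fun n => by
    have : (0:ℝ) ≤ (n:ℝ) := Nat.cast_nonneg n; linarith
  have h0 : Tendsto g atTop (nhds 0) := by
    have h1 : Tendsto (fun n : ℕ => (n : ℝ) + y - 1/2) atTop atTop := by
      simpa [add_sub_assoc] using
        tendsto_atTop_add_const_right atTop (y - 1/2) tendsto_natCast_atTop_atTop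
    have h2 : Tendsto (fun n : ℕ => ((n : ℝ) + y - 1/2) ^ 2) atTop atTop := by
      simpa [pow_two] using h1.atTop_mul_atTop₀ h1
    have h3 : Tendsto (fun n : ℕ => 2 * ((n : ℝ) + y - 1/2) ^ 2) atTop atTop :=
      h2.const_mul_atTop two_pos
    have h4 : Tendsto (fun n : ℕ => (2 * ((n : ℝ) + y - 1/2) ^ 2)⁻¹) atTop (nhds 0) :=
      h3.inv_tendsto_atTop
    exact h4.congr (fun n => (one_div _).symm)
  have hkey : ∀ n : ℕ, 1 / ((n : ℝ) + y) ^ 3 ≤ g n - g (n + 1) := by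
    intro n
    have h1 := hpos n
    have h2 := hpos (n + 1)
    have hy1 : (0:ℝ) < (n : ℝ) + y := by linarith
    have heq : g n - g (n + 1) = ((n:ℝ) + y) / (((n:ℝ) + y - 1/2) ^ 2 * ((n:ℝ) + y + 1/2) ^ 2) := by
      simp only [hg]; push_cast
      have h2' : (0:ℝ) < (n:ℝ) + 1 + y - 1/2 := by linarith
      rw [div_sub_div _ _ (by positivity) (by positivity),
        div_eq_div_iff (by positivity) (by positivity)]
      ring
    rw [heq, div_le_div_iff₀ (by positivity) (by positivity)]
    nlinarith [sq_nonneg (((n:ℝ)+y)^2 - 1/4), sq_nonneg ((n:ℝ)+y)]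
  have hnn : ∀ n : ℕ, 0 ≤ g n - g (n + 1) :=
    fun n => le_trans (by positivity) (hkey n)
  have hts : HasSum (fun n => g n - g (n + 1)) (1 / (2 * (y - 1/2) ^ 2)) := by
    have := hasSum_telescope' g h0 hnn
    simpa [hg] using this
  have hsum3 := summable_shift y hy 3 (by norm_num)
  calc (∑' m : ℕ, 1 / ((m : ℝ) + y) ^ 3) ≤ ∑' n, (g n - g (n + 1)) :=
        Summable.tsum_le_tsum hkey hsum3 hts.summable
    _ = 1 / (2 * (y - 1/2) ^ 2) := hts.tsum_eq

lemma hasDerivAt_trigamma (y : ℝ) (hy : 1 < y) : HasDerivAt trigamma (psi2 y) y := by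
  have key : HasDerivAt (fun z : ℝ => ∑' m : ℕ, 1 / ((m : ℝ) + z) ^ 2)
      (∑' m : ℕ, -2 / ((m : ℝ) + y) ^ 3) y := by
    apply hasDerivAt_tsum_of_isPreconnected
      (u := fun m : ℕ => 2 / ((m : ℝ) + 1) ^ 3)
      (g' := fun (m : ℕ) (z : ℝ) => -2 / ((m : ℝ) + z) ^ 3)
      ?_ isOpen_Ioi (isPreconnected_Ioi) ?_ ?_ (show (1:ℝ) + 1 ∈ Ioi (1:ℝ) by norm_num) ?_ hy
    · have := (summable_shift 1 le_rfl 3 (by norm_num)).mul_left 2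
      simpa [div_eq_mul_inv] using this
    · intro m z hz
      have hz1 : (1:ℝ) < z := hz
      have hne : ((m:ℝ) + z) ≠ 0 := by positivity
      have h1 : HasDerivAt (fun z : ℝ => ((m:ℝ) + z) ^ 2) (2 * ((m:ℝ) + z)) z := by
        simpa using (((hasDerivAt_id z).const_add (m:ℝ)).fun_pow 2)
      have h2 := (hasDerivAt_const z (1:ℝ)).div h1 (by positivity)
      refine h2.congr_deriv ?_
      field_simp
      ring
    · intro m z hz
      have hz1 : (1:ℝ) < z := hz
      have h1 : (0:ℝ) < (m:ℝ) + 1 := by positivity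
      have h2 : (0:ℝ) < (m:ℝ) + z := by linarith
      have hval : ‖(-2 : ℝ) / ((m:ℝ)+z)^3‖ = 2 / ((m:ℝ)+z)^3 := by
        rw [Real.norm_eq_abs, abs_div, abs_of_pos (pow_pos h2 3)]
        norm_num
      rw [hval, div_le_div_iff₀ (by positivity) (by positivity)]
      nlinarith [pow_le_pow_left₀ h1.le (by linarith : (m:ℝ)+1 ≤ (m:ℝ)+z) 3]
    · exact summable_shift 2 (by norm_num) 2 le_rfl |>.congr (fun m => by norm_num)
  have heq : (∑' m : ℕ, -2 / ((m : ℝ) + y) ^ 3) = psi2 y := by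
    rw [psi2, ← tsum_mul_left]
    congr 1; funext m; rw [mul_one_div]
  rw [← heq]
  exact key

lemma hasDerivAt_F (x : ℝ) (hx : x ∈ Set.Ioo (0:ℝ) 1) :
    HasDerivAt (fun x : ℝ => 1 - x^4 - 4*x^2 * trigamma (1/(1-x)))
      (-(4*x^3) - (8*x*trigamma (1/(1-x)) + 4*x^2*(psi2 (1/(1-x)) * (1/(1-x)^2)))) x := by
  obtain ⟨hx0, hx1⟩ := hx
  have hu : (0:ℝ) < 1 - x := by linarith
  have hune : (1:ℝ) - x ≠ 0 := ne_of_gt hu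
  have hy1 : 1 < 1/(1-x) := by rw [lt_div_iff₀ hu]; linarith
  have h1 : HasDerivAt (fun x : ℝ => 1 - x) (-1) x := by
    simpa using (hasDerivAt_id x).const_sub 1
  have hin : HasDerivAt (fun x : ℝ => 1/(1-x)) (1/(1-x)^2) x := by
    have := (hasDerivAt_const x (1:ℝ)).div h1 hune
    refine this.congr_deriv ?_
    field_simp
    ring
  have hT : HasDerivAt (fun x : ℝ => trigamma (1/(1-x)))
      (psi2 (1/(1-x)) * (1/(1-x)^2)) x :=
    HasDerivAt.comp (h₂ := trigamma) x (hasDerivAt_trigamma _ hy1) hin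
  have hx2 : HasDerivAt (fun x : ℝ => 4*x^2) (8*x) x := by
    have h := (hasDerivAt_pow 2 x).const_mul (4:ℝ)
    refine h.congr_deriv ?_
    push_cast
    ring
  have hprod : HasDerivAt (fun x : ℝ => 4*x^2 * trigamma (1/(1-x)))
      (8*x*trigamma (1/(1-x)) + 4*x^2*(psi2 (1/(1-x)) * (1/(1-x)^2))) x := hx2.mul hT
  have h4 : HasDerivAt (fun x : ℝ => 1 - x^4) (-(4*x^3)) x := by
    simpa using (hasDerivAt_pow 4 x).const_sub 1
  exact h4.sub hprod

theorem stmt5 :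
    StrictAntiOn (fun x : ℝ => 1 - x^4 - 4*x^2 * trigamma (1/(1-x))) (Set.Ioo 0 1) := by
  apply strictAntiOn_of_deriv_neg (convex_Ioo 0 1)
  · intro x hx
    exact (hasDerivAt_F x hx).continuousAt.continuousWithinAt
  · intro x hx
    rw [interior_Ioo] at hx
    rw [(hasDerivAt_F x hx).deriv]
    obtain ⟨hx0, hx1⟩ := hx
    have hu : (0:ℝ) < 1 - x := by linarith
    have hune : (1:ℝ) - x ≠ 0 := ne_of_gt hu
    have hy1 : 1 < 1/(1-x) := by rw [lt_div_iff₀ hu]; linarith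
    set y := 1/(1-x) with hyd
    set T := trigamma y with hTd
    set S := ∑' m : ℕ, 1 / ((m:ℝ) + y)^3 with hSd
    have hTge : 1 - x ≤ T := by
      have h := trigamma_ge y hy1.le
      rwa [hyd, one_div_one_div] at h
    have hSle : S ≤ 2*(1-x)^2/(1+x)^2 := by
      have h := cube_sum_le y hy1.le
      have h1x : (1:ℝ) + x ≠ 0 := by positivity
      have hy2 : y - 1/2 = (1+x)/(2*(1-x)) := by
        rw [hyd]; field_simp; ring
      have heq : 1/(2*(y - 1/2)^2) = 2*(1-x)^2/(1+x)^2 := by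
        rw [hy2, div_pow, one_div, mul_div_assoc', inv_div,
          div_eq_div_iff (by positivity) (by positivity)]
        ring
      rwa [heq] at h
    have hpsi : psi2 y = -2 * S := rfl
    rw [hpsi]
    have hS3 : S*(1+x)^2 ≤ 2*(1-x)^2 := by
      have h := mul_le_mul_of_nonneg_right hSle (by positivity : (0:ℝ) ≤ (1+x)^2)
      calc S*(1+x)^2 ≤ (2*(1-x)^2/(1+x)^2)*(1+x)^2 := h
        _ = 2*(1-x)^2 := by field_simp
    have hA : S * (1/(1-x)^2) ≤ 2/(1+x)^2 := by
      rw [mul_one_div, div_le_div_iff₀ (by positivity) (by positivity)]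
      calc S * (1+x)^2 ≤ 2*(1-x)^2 := hS3
        _ = 2 * (1-x)^2 := by ring
    have hC : 16*x^2/(1+x)^2 < 4*x^3 + 8*x*(1-x) := by
      rw [div_lt_iff₀ (by positivity)]
      have h9 : (0:ℝ) < (1-x)^2 := pow_pos hu 2
      nlinarith [mul_pos hx0 (mul_pos h9 (show (0:ℝ) < x^2+2*x+2 by positivity))]
    have hTb : 8*x*(1-x) ≤ 8*x*T :=
      mul_le_mul_of_nonneg_left hTge (by positivity)
    have hSb : 8*x^2 * (S*(1/(1-x)^2)) ≤ 8*x^2*(2/(1+x)^2) :=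
      mul_le_mul_of_nonneg_left hA (by positivity)
    have hrw : -(4*x^3) - (8*x*T + 4*x^2*((-2*S) * (1/(1-x)^2)))
        = -(4*x^3) - 8*x*T + 8*x^2*(S*(1/(1-x)^2)) := by ring
    rw [hrw]
    have h16 : 8*x^2*(2/(1+x)^2) = 16*x^2/(1+x)^2 := by ring
    linarith [hSb, hTb, hC, h16.le]
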